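/- Let Γ be a symmetric irreducible N×N generator matrix and Λ ∈ ℝ^N with Λ_j ≥ 0. For τ > 0 set Λ_∞^{1/τ} = inf_{X ∈ S₊} ⟨(-(1/τ)Γ + Λ_d)X, X⟩. Then Λ_∞^{1/τ} → (1/N) Σ_j Λ_j as τ → 0⁺ (strong coupling limit). -/

import Mathlib

open Real Filter

section helpers
variable {N : ℕ}


private lemma col_zero {Γ : Matrix (Fin N) (Fin N) ℝ} (hsym : Γ.IsSymm)
    (hrow : ∀ j, ∑ l, Γ j l = 0) (l : Fin N) : ∑ j, Γ j l = 0 := by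
  have h : ∀ j, Γ j l = Γ l j := fun j => hsym.apply l j
  simp_rw [h]
  exact hrow l

private lemma quad_identity {Γ : Matrix (Fin N) (Fin N) ℝ} (hsym : Γ.IsSymm)
    (hrow : ∀ j, ∑ l, Γ j l = 0) (Y : Fin N → ℝ) :
    ∑ j, ∑ l, Γ j l * (Y j - Y l) ^ 2 = -2 * ∑ j, ∑ l, Γ j l * Y j * Y l := by
  have hcol := col_zero hsym hrow
  have h1 : ∀ j l, Γ j l * (Y j - Y l) ^ 2
      = Γ j l * Y j ^ 2 + Γ j l * Y l ^ 2 - 2 * (Γ j l * Y j * Y l) := by intros; ring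
  simp_rw [h1, Finset.sum_sub_distrib, Finset.sum_add_distrib]
  have e1 : ∑ j, ∑ l, Γ j l * Y j ^ 2 = 0 := by
    apply Finset.sum_eq_zero; intro j _
    rw [← Finset.sum_mul, hrow j, zero_mul]
  have e2 : ∑ j : Fin N, ∑ l, Γ j l * Y l ^ 2 = 0 := by
    rw [Finset.sum_comm]
    apply Finset.sum_eq_zero; intro l _
    rw [← Finset.sum_mul, hcol l, zero_mul]
  have e3 : ∑ j : Fin N, ∑ l, 2 * (Γ j l * Y j * Y l) = 2 * ∑ j, ∑ l, Γ j l * Y j * Y l := by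
    simp [Finset.mul_sum]
  rw [e1, e2, e3]; ring

private lemma quad_nonneg {Γ : Matrix (Fin N) (Fin N) ℝ}
    (hoff : ∀ j l, j ≠ l → 0 ≤ Γ j l) (Y : Fin N → ℝ) :
    0 ≤ ∑ j, ∑ l, Γ j l * (Y j - Y l) ^ 2 := by
  apply Finset.sum_nonneg; intro j _
  apply Finset.sum_nonneg; intro l _
  rcases eq_or_ne j l with h | h
  · simp [h]
  · exact mul_nonneg (hoff j l h) (sq_nonneg _)

private lemma Qnn {Γ : Matrix (Fin N) (Fin N) ℝ} (hsym : Γ.IsSymm)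
    (hoff : ∀ j l, j ≠ l → 0 ≤ Γ j l) (hrow : ∀ j, ∑ l, Γ j l = 0) (Y : Fin N → ℝ) :
    0 ≤ -(∑ j, ∑ l, Γ j l * Y j * Y l) := by
  have h1 := quad_identity hsym hrow Y
  have h2 := quad_nonneg hoff Y
  linarith

private lemma factor_tau (τ : ℝ) (Γ : Matrix (Fin N) (Fin N) ℝ) (X : Fin N → ℝ) :
    ∑ j, ∑ l, (-((1 / τ) * Γ j l)) * X j * X l
      = (1 / τ) * (-(∑ j, ∑ l, Γ j l * X j * X l)) := by
  calc ∑ j, ∑ l, (-((1 / τ) * Γ j l)) * X j * X l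
      = ∑ j, ∑ l, (1 / τ) * -(Γ j l * X j * X l) := by
        apply Finset.sum_congr rfl; intro j _
        apply Finset.sum_congr rfl; intro l _; ring
    _ = (1 / τ) * ∑ j, ∑ l, -(Γ j l * X j * X l) := by
        rw [Finset.mul_sum]
        exact Finset.sum_congr rfl fun j _ => (Finset.mul_sum _ _ _).symm
    _ = (1 / τ) * -(∑ j, ∑ l, Γ j l * X j * X l) := by simp


private lemma rigidity (hN : 2 ≤ N) {Γ : Matrix (Fin N) (Fin N) ℝ}
    (hsym : Γ.IsSymm) (hoff : ∀ j l, j ≠ l → 0 ≤ Γ j l) (hrow : ∀ j, ∑ l, Γ j l = 0)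
    (hirr : ∀ S : Set (Fin N), S.Nonempty → Sᶜ.Nonempty → ∃ j ∈ S, ∃ l ∈ Sᶜ, Γ j l ≠ 0)
    (Y : Fin N → ℝ) (hsum : ∑ j, Y j = 0)
    (hQ : ∑ j, ∑ l, Γ j l * (Y j - Y l) ^ 2 = 0) : ∀ j, Y j = 0 := by
  have hterm : ∀ j l, j ≠ l → Γ j l * (Y j - Y l) ^ 2 = 0 := by
    intro j l hjl
    have houter : ∀ j ∈ Finset.univ, (0:ℝ) ≤ ∑ l, Γ j l * (Y j - Y l) ^ 2 := by
      intro j _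
      apply Finset.sum_nonneg; intro l _
      rcases eq_or_ne j l with h | h
      · simp [h]
      · exact mul_nonneg (hoff j l h) (sq_nonneg _)
    have hinner := (Finset.sum_eq_zero_iff_of_nonneg houter).mp hQ j (Finset.mem_univ j)
    have hin : ∀ l ∈ Finset.univ, (0:ℝ) ≤ Γ j l * (Y j - Y l) ^ 2 := by
      intro l _
      rcases eq_or_ne j l with h | h
      · simp [h]
      · exact mul_nonneg (hoff j l h) (sq_nonneg _)
    exact (Finset.sum_eq_zero_iff_of_nonneg hin).mp hinner l (Finset.mem_univ l)
  have hkey : ∀ j l, Γ j l ≠ 0 → Y j = Y l := by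
    intro j l hΓ
    rcases eq_or_ne j l with h | h
    · rw [h]
    · rcases mul_eq_zero.mp (hterm j l h) with h' | h'
      · exact absurd h' hΓ
      · have := pow_eq_zero_iff (n := 2) (by norm_num) |>.mp h'
        linarith [sub_eq_zero.mp this]
  set a : Fin N := ⟨0, by omega⟩ with ha
  have hconst : ∀ j, Y j = Y a := by
    by_contra hc
    push_neg at hc
    obtain ⟨j₀, hj₀⟩ := hc
    obtain ⟨j, hjS, l, hlS, hΓ⟩ := hirr {j | Y j = Y a} ⟨a, rfl⟩ ⟨j₀, hj₀⟩
    exact hlS ((hkey j l hΓ).symm.trans hjS)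
  have : ∑ j, Y j = N * Y a := by
    rw [Finset.sum_congr rfl fun j _ => hconst j]
    simp [Finset.card_univ, mul_comm]
  intro j
  rw [hconst j]
  have hN0 : (N:ℝ) ≠ 0 := Nat.cast_ne_zero.mpr (by omega)
  rw [hsum] at this
  have h0 : (N:ℝ) * Y a = 0 := this.symm
  rcases mul_eq_zero.mp h0 with h | h
  · exact absurd h hN0
  · exact h


private lemma gap_lemma (hN : 2 ≤ N) (Γ : Matrix (Fin N) (Fin N) ℝ)
    (hsym : Γ.IsSymm) (hoff : ∀ j l, j ≠ l → 0 ≤ Γ j l) (hrow : ∀ j, ∑ l, Γ j l = 0)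
    (hirr : ∀ S : Set (Fin N), S.Nonempty → Sᶜ.Nonempty → ∃ j ∈ S, ∃ l ∈ Sᶜ, Γ j l ≠ 0) :
    ∃ γ > 0, ∀ Y : Fin N → ℝ, (∑ j, Y j = 0) →
      γ * ∑ j, (Y j) ^ 2 ≤ -(∑ j, ∑ l, Γ j l * Y j * Y l) := by
  set Q : (Fin N → ℝ) → ℝ := fun Y => -(∑ j, ∑ l, Γ j l * Y j * Y l) with hQdef
  have hQcont : Continuous Q := by
    apply Continuous.neg
    apply continuous_finset_sum; intro j _
    apply continuous_finset_sum; intro l _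
    exact (continuous_const.mul (continuous_apply j)).mul (continuous_apply l)
  set K : Set (Fin N → ℝ) := {Y | ∑ j, Y j = 0} ∩ {Y | ∑ j, Y j ^ 2 = 1} with hKdef
  have hclosed : IsClosed K := by
    apply IsClosed.inter
    · exact isClosed_eq (continuous_finset_sum _ fun j _ => continuous_apply j) continuous_const
    · exact isClosed_eq (continuous_finset_sum _ fun j _ => (continuous_apply j).pow 2)
        continuous_const
  have hbdd : Bornology.IsBounded K := by
    apply Bornology.IsBounded.subset (Metric.isBounded_closedBall (x := (0 : Fin N → ℝ)) (r := 1))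
    intro Y hY
    rw [Metric.mem_closedBall, dist_zero_right]
    rw [pi_norm_le_iff_of_nonneg zero_le_one]
    intro i
    rw [Real.norm_eq_abs, ← Real.sqrt_one, ← Real.sqrt_sq_eq_abs]
    apply Real.sqrt_le_sqrt
    rw [← hY.2]
    exact Finset.single_le_sum (fun j _ => sq_nonneg (Y j)) (Finset.mem_univ i)
  have hcompact : IsCompact K := Metric.isCompact_of_isClosed_isBounded hclosed hbdd
  -- nonempty
  have hab : (⟨0, by omega⟩ : Fin N) ≠ (⟨1, by omega⟩ : Fin N) :=
    Fin.ne_of_val_ne (by norm_num)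
  set a : Fin N := ⟨0, by omega⟩
  set b : Fin N := ⟨1, by omega⟩
  set s : ℝ := Real.sqrt 2⁻¹ with hsdef
  have hs2 : s ^ 2 = 2⁻¹ := Real.sq_sqrt (by norm_num)
  set Y₀ : Fin N → ℝ := fun j => s * (if j = a then 1 else 0) - s * (if j = b then 1 else 0)
    with hY₀def
  have hY₀K : Y₀ ∈ K := by
    constructor
    · simp [hY₀def, Finset.sum_sub_distrib, ← Finset.mul_sum]
    · have hsq : ∀ j, Y₀ j ^ 2
          = s ^ 2 * (if j = a then 1 else 0) + s ^ 2 * (if j = b then 1 else 0) := by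
        intro j
        by_cases h1 : j = a <;> by_cases h2 : j = b
        · exact absurd (h1.symm.trans h2) hab
        all_goals simp [hY₀def, h1, h2, hab, Ne.symm hab] <;> ring
      show ∑ j, Y₀ j ^ 2 = 1
      simp_rw [hsq]
      rw [Finset.sum_add_distrib, ← Finset.mul_sum, ← Finset.mul_sum]
      simp [hs2]
      norm_num
  obtain ⟨Y₁, hY₁K, hmin'⟩ := hcompact.exists_isMinOn ⟨Y₀, hY₀K⟩ hQcont.continuousOn
  have hmin : ∀ Z ∈ K, Q Y₁ ≤ Q Z := fun Z hZ => hmin' hZ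
  have hQ1pos : 0 < Q Y₁ := by
    rcases lt_or_eq_of_le (Qnn hsym hoff hrow Y₁) with h | h
    · exact h
    · exfalso
      have hzero : ∑ j, ∑ l, Γ j l * (Y₁ j - Y₁ l) ^ 2 = 0 := by
        have := quad_identity hsym hrow Y₁
        have hq : ∑ j, ∑ l, Γ j l * Y₁ j * Y₁ l = 0 := by
          have := h.symm; simp [hQdef] at this; linarith
        rw [this, hq]; ring
      have := rigidity hN hsym hoff hrow hirr Y₁ hY₁K.1 hzero
      have h1 : ∑ j, Y₁ j ^ 2 = 1 := hY₁K.2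
      rw [Finset.sum_eq_zero (fun j _ => by rw [this j]; ring)] at h1
      norm_num at h1
  refine ⟨Q Y₁, hQ1pos, ?_⟩
  intro Y hYsum
  rcases (Finset.sum_nonneg (fun j _ => sq_nonneg (Y j)) : (0:ℝ) ≤ ∑ j, Y j ^ 2).eq_or_lt
    with h | h
  · rw [← h, mul_zero]; exact Qnn hsym hoff hrow Y
  · set σ : ℝ := Real.sqrt (∑ j, Y j ^ 2) with hσdef
    have hσ : 0 < σ := Real.sqrt_pos.mpr h
    have hσ2 : σ ^ 2 = ∑ j, Y j ^ 2 := Real.sq_sqrt h.le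
    set Z : Fin N → ℝ := fun j => Y j / σ with hZdef
    have hZK : Z ∈ K := by
      constructor
      · show ∑ j, Y j / σ = 0
        rw [← Finset.sum_div, hYsum, zero_div]
      · show ∑ j, (Y j / σ) ^ 2 = 1
        simp_rw [div_pow]
        rw [← Finset.sum_div, ← hσ2, div_self (by positivity)]
    have hQZ : Q Z = Q Y / σ ^ 2 := by
      simp only [hQdef, hZdef]
      rw [neg_div, neg_inj, Finset.sum_div]
      apply Finset.sum_congr rfl; intro j _
      rw [Finset.sum_div]
      apply Finset.sum_congr rfl; intro l _
      field_simp
    have := hmin Z hZK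
    rw [hQZ, le_div_iff₀ (by positivity)] at this
    calc Q Y₁ * ∑ j, Y j ^ 2 = Q Y₁ * σ ^ 2 := by rw [hσ2]
      _ ≤ Q Y := this

end helpers

set_option maxHeartbeats 1000000 in
/-- Strong-coupling limit of the decay rate: with `Λ_j ≥ 0`,
`Λ_∞^{1/τ} = inf_{X ∈ S₊} ⟨(-(1/τ)Γ + Λ_d)X, X⟩ → (1/N)∑_j Λ_j` as `τ → 0⁺`. -/
theorem stmt_11 (N : ℕ) (hN : 2 ≤ N) (Γ : Matrix (Fin N) (Fin N) ℝ) (Λ : Fin N → ℝ)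
    (hsym : Γ.IsSymm)
    (hoff : ∀ j l, j ≠ l → 0 ≤ Γ j l)
    (hrow : ∀ j, ∑ l, Γ j l = 0)
    (hirr : ∀ S : Set (Fin N), S.Nonempty → Sᶜ.Nonempty →
      ∃ j ∈ S, ∃ l ∈ Sᶜ, Γ j l ≠ 0)
    (hΛ : ∀ j, 0 ≤ Λ j) :
    Tendsto
      (fun τ : ℝ =>
        sInf { r : ℝ | ∃ X : Fin N → ℝ, (∀ j, 0 ≤ X j) ∧ (∑ j, X j ^ 2 = 1) ∧
          r = (∑ j, ∑ l, (-((1 / τ) * Γ j l)) * X j * X l) + ∑ j, Λ j * X j ^ 2 })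
      (nhdsWithin 0 (Set.Ioi 0)) (nhds ((∑ j, Λ j) / N)) := by
  have hNpos : 0 < N := by omega
  have hN0 : (N:ℝ) ≠ 0 := Nat.cast_ne_zero.mpr (by omega)
  have hNR : (1:ℝ) ≤ N := by exact_mod_cast hNpos
  obtain ⟨γ, hγ, hgap⟩ := gap_lemma hN Γ hsym hoff hrow hirr
  set L := ∑ j, Λ j with hLdef
  have hL : 0 ≤ L := Finset.sum_nonneg fun j _ => hΛ j
  set A := L / (N:ℝ) with hAdef
  have hA : 0 ≤ A := div_nonneg hL (by positivity)
  have hLA : L = A * N := by rw [hAdef, div_mul_cancel₀ L hN0]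
  rw [Metric.tendsto_nhdsWithin_nhds]
  intro ε hε
  have hE : (0:ℝ) < ε / 2 := by linarith
  set E := ε / 2 with hEdef
  have hD : (0:ℝ) < A + L ^ 2 / E + 1 := by
    have : 0 ≤ L ^ 2 / E := div_nonneg (sq_nonneg L) hE.le
    linarith
  refine ⟨γ / (A + L ^ 2 / E + 1), div_pos hγ hD, ?_⟩
  intro τ hτ hdist
  simp only [Set.mem_Ioi] at hτ
  rw [Real.dist_eq, sub_zero, abs_of_pos hτ] at hdist
  -- β = 1/τ, key bound
  set β := 1 / τ with hβdef
  have hβ : 0 < β := by positivity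
  have hγβ : A + L ^ 2 / E + 1 < γ * β := by
    rw [hβdef, mul_one_div, lt_div_iff₀ hτ]
    calc (A + L ^ 2 / E + 1) * τ < (A + L ^ 2 / E + 1) * (γ / (A + L ^ 2 / E + 1)) := by
          exact mul_lt_mul_of_pos_left hdist hD
      _ = γ := by field_simp
  -- membership of A
  set u : Fin N → ℝ := fun _ => (Real.sqrt N)⁻¹ with hudef
  have hu2 : ∀ j : Fin N, u j ^ 2 = (N:ℝ)⁻¹ := by
    intro j
    simp only [hudef]
    rw [inv_pow, Real.sq_sqrt (Nat.cast_nonneg N)]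
  have husum : ∑ j, u j ^ 2 = 1 := by
    rw [Finset.sum_congr rfl (fun j _ => hu2 j), Finset.sum_const, Finset.card_univ,
      Fintype.card_fin, nsmul_eq_mul, mul_inv_cancel₀ hN0]
  have hAmem : A ∈ { r : ℝ | ∃ X : Fin N → ℝ, (∀ j, 0 ≤ X j) ∧ (∑ j, X j ^ 2 = 1) ∧
      r = (∑ j, ∑ l, (-((1 / τ) * Γ j l)) * X j * X l) + ∑ j, Λ j * X j ^ 2 } := by
    refine ⟨u, fun j => by positivity, husum, ?_⟩
    have h1 : ∑ j, ∑ l, (-((1 / τ) * Γ j l)) * u j * u l = 0 := by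
      apply Finset.sum_eq_zero; intro j _
      have : ∀ l, (-((1 / τ) * Γ j l)) * u j * u l = (-(1/τ) * u j * u j) * Γ j l := by
        intro l; simp only [hudef]; ring
      simp_rw [this, ← Finset.mul_sum, hrow j, mul_zero]
    have h2 : ∑ j, Λ j * u j ^ 2 = A := by
      rw [Finset.sum_congr rfl (fun j _ => by rw [hu2 j]), ← Finset.sum_mul, hAdef,
        div_eq_mul_inv]
    rw [h1, h2, zero_add]
  -- lower bound for every element
  have hlow : ∀ r ∈ { r : ℝ | ∃ X : Fin N → ℝ, (∀ j, 0 ≤ X j) ∧ (∑ j, X j ^ 2 = 1) ∧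
      r = (∑ j, ∑ l, (-((1 / τ) * Γ j l)) * X j * X l) + ∑ j, Λ j * X j ^ 2 },
      A - E ≤ r := by
    rintro r ⟨X, hX0, hX2, hrval⟩
    set m := (∑ j, X j) / N with hmdef
    set Y : Fin N → ℝ := fun j => X j - m with hYdef
    have hXY : ∀ j, X j = m + Y j := fun j => by simp only [hYdef]; ring
    have hYsum : ∑ j, Y j = 0 := by
      rw [hYdef]
      rw [Finset.sum_sub_distrib, Finset.sum_const, Finset.card_univ, Fintype.card_fin,
        nsmul_eq_mul, hmdef]
      field_simp
      ring
    set t := Real.sqrt (∑ j, Y j ^ 2) with htdef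
    have ht0 : 0 ≤ t := Real.sqrt_nonneg _
    have ht2 : t ^ 2 = ∑ j, Y j ^ 2 :=
      Real.sq_sqrt (Finset.sum_nonneg fun j _ => sq_nonneg _)
    have hdecomp : (N:ℝ) * m ^ 2 + t ^ 2 = 1 := by
      rw [ht2, ← hX2]
      have e : ∀ j, X j ^ 2 = m ^ 2 + 2 * m * Y j + Y j ^ 2 := by
        intro j; rw [hXY j]; ring
      simp_rw [e, Finset.sum_add_distrib, Finset.sum_const, Finset.card_univ, Fintype.card_fin,
        nsmul_eq_mul, ← Finset.mul_sum, hYsum, mul_zero]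
      ring
    have hQshift : ∑ j, ∑ l, Γ j l * X j * X l = ∑ j, ∑ l, Γ j l * Y j * Y l := by
      have hcol := col_zero hsym hrow
      have e : ∀ j l, Γ j l * X j * X l =
          m * m * Γ j l + m * Y l * Γ j l + m * Y j * Γ j l + Γ j l * Y j * Y l := by
        intro j l; rw [hXY j, hXY l]; ring
      simp_rw [e, Finset.sum_add_distrib]
      have e1 : ∑ j : Fin N, ∑ l, m * m * Γ j l = 0 := by
        apply Finset.sum_eq_zero; intro j _
        rw [← Finset.mul_sum, hrow j, mul_zero]
      have e2 : ∑ j : Fin N, ∑ l, m * Y l * Γ j l = 0 := by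
        rw [Finset.sum_comm]
        apply Finset.sum_eq_zero; intro l _
        rw [← Finset.mul_sum, hcol l, mul_zero]
      have e3 : ∑ j : Fin N, ∑ l, m * Y j * Γ j l = 0 := by
        apply Finset.sum_eq_zero; intro j _
        rw [← Finset.mul_sum, hrow j, mul_zero]
      rw [e1, e2, e3]; ring
    have hgapY := hgap Y hYsum
    have hQY : γ * t ^ 2 ≤ -(∑ j, ∑ l, Γ j l * X j * X l) := by
      rw [← hQshift, ← ht2] at hgapY
      exact hgapY
    have hYabs : ∀ j, |Y j| ≤ t := by
      intro j
      rw [← Real.sqrt_sq_eq_abs, htdef]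
      exact Real.sqrt_le_sqrt (Finset.single_le_sum (fun i _ => sq_nonneg (Y i))
        (Finset.mem_univ j))
    have habscross : |∑ j, Λ j * Y j| ≤ L * t := by
      calc |∑ j, Λ j * Y j| ≤ ∑ j, |Λ j * Y j| := Finset.abs_sum_le_sum_abs _ _
        _ ≤ ∑ j, Λ j * t := by
            apply Finset.sum_le_sum; intro j _
            rw [abs_mul, abs_of_nonneg (hΛ j)]
            exact mul_le_mul_of_nonneg_left (hYabs j) (hΛ j)
        _ = L * t := by rw [← Finset.sum_mul]
    have hm2 : m ^ 2 ≤ 1 := by nlinarith [sq_nonneg t, sq_nonneg m]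
    have hm1a : -1 ≤ m := by nlinarith [sq_nonneg (m + 1)]
    have hm1b : m ≤ 1 := by nlinarith [sq_nonneg (m - 1)]
    have hcrossm : -(2 * L * t) ≤ 2 * m * (∑ j, Λ j * Y j) := by
      obtain ⟨hc1, hc2⟩ := abs_le.mp habscross
      nlinarith [mul_nonneg (by linarith : (0:ℝ) ≤ 1 + m) (by linarith : 0 ≤ L * t + ∑ j, Λ j * Y j),
        mul_nonneg (by linarith : (0:ℝ) ≤ 1 - m) (by linarith : 0 ≤ L * t - ∑ j, Λ j * Y j)]
    have hΛterm : A * (1 - t ^ 2) - 2 * L * t ≤ ∑ j, Λ j * X j ^ 2 := by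
      have expand : ∑ j, Λ j * X j ^ 2
          = m ^ 2 * L + 2 * m * (∑ j, Λ j * Y j) + ∑ j, Λ j * Y j ^ 2 := by
        have e : ∀ j, Λ j * X j ^ 2
            = m ^ 2 * Λ j + 2 * m * (Λ j * Y j) + Λ j * Y j ^ 2 := by
          intro j; rw [hXY j]; ring
        simp_rw [e, Finset.sum_add_distrib, ← Finset.mul_sum]
        rw [hLdef]
      have hYsq : 0 ≤ ∑ j, Λ j * Y j ^ 2 :=
        Finset.sum_nonneg fun j _ => mul_nonneg (hΛ j) (sq_nonneg _)
      have hNm : A * (1 - t ^ 2) = m ^ 2 * L := by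
        rw [hLA]; nlinarith [hdecomp]
      rw [expand, ← hNm]
      linarith
    -- final estimate
    have hfirst := factor_tau τ Γ X
    have hstep : A - E ≤ β * (γ * t ^ 2) + (A * (1 - t ^ 2) - 2 * L * t) := by
      have ha0 : 0 < γ * β - A := by
        have : 0 ≤ L ^ 2 / E := div_nonneg (sq_nonneg L) hE.le
        linarith
      have haE : L ^ 2 ≤ (γ * β - A) * E := by
        have h := div_mul_cancel₀ (L ^ 2) (ne_of_gt hE)
        nlinarith
      nlinarith [sq_nonneg ((γ * β - A) * t - L), mul_pos ha0 hE]
    calc A - E ≤ β * (γ * t ^ 2) + (A * (1 - t ^ 2) - 2 * L * t) := hstep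
      _ ≤ β * (-(∑ j, ∑ l, Γ j l * X j * X l)) + ∑ j, Λ j * X j ^ 2 :=
          add_le_add (mul_le_mul_of_nonneg_left hQY hβ.le) hΛterm
      _ = r := by rw [hrval, hfirst, hβdef]
  -- bounded below / conclude
  have hbdd : BddBelow { r : ℝ | ∃ X : Fin N → ℝ, (∀ j, 0 ≤ X j) ∧ (∑ j, X j ^ 2 = 1) ∧
      r = (∑ j, ∑ l, (-((1 / τ) * Γ j l)) * X j * X l) + ∑ j, Λ j * X j ^ 2 } :=
    ⟨A - E, fun r hr => hlow r hr⟩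
  have hub := csInf_le hbdd hAmem
  have hlb := le_csInf ⟨A, hAmem⟩ hlow
  rw [Real.dist_eq, abs_lt]
  constructor <;> [linarith; linarith]
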